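/- Let D be a connected finite graph and (F,G) an elementary pair of maximal nested sets on D (i.e. |F \ G| = 1 = |G \ F|). Let B be the unique unsaturated element of F ∩ G, and let B_1, B_2 be the unique elements of F\G and G\F respectively. Then: (1) the vertices α^B_F and α^B_G are distinct, and the set of vertices of B not covered by the maximal elements of F∩G inside B is exactly {α^B_F, α^B_G}; (2) B_1 is the connected component of B \ {α^B_F} containing α^B_G, and B_2 is the connected component of B \ {α^B_G} containing α^B_F; (3) B_1 and B_2 are not compatible and B_1 ∪ B_2 = B. -/

import Mathlib

open scoped Classical

section NestedSets

variable {V : Type*} [Fintype V] [DecidableEq V]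

/-- The (induced subgraph on the) finite vertex set `B` is connected (in particular nonempty). -/
def Conn (G : SimpleGraph V) (B : Finset V) : Prop :=
  (G.induce (B : Set V)).Connected

/-- Two vertex sets are orthogonal: no edge of `G` joins a vertex of one to a vertex
of the other. -/
def Orth (G : SimpleGraph V) (B C : Finset V) : Prop :=
  ∀ a ∈ B, ∀ b ∈ C, ¬ G.Adj a b

/-- Two subdiagrams are compatible if one contains the other or they are orthogonal. -/
def Compat (G : SimpleGraph V) (B C : Finset V) : Prop :=
  B ⊆ C ∨ C ⊆ B ∨ Orth G B C

/-- A nested set on the (connected) diagram `D` with vertex set `V`: a collection of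
pairwise compatible connected subdiagrams containing `D` itself. -/
def Nested (G : SimpleGraph V) (H : Finset (Finset V)) : Prop :=
  Finset.univ ∈ H ∧ (∀ B ∈ H, Conn G B) ∧ ∀ B ∈ H, ∀ C ∈ H, Compat G B C

/-- `iN H B` is the union of the elements of `H` strictly contained in `B`;
this coincides with the union of the *maximal* elements of `H` strictly contained in `B`. -/
noncomputable def iN (H : Finset (Finset V)) (B : Finset V) : Finset V :=
  (H.filter fun C => C ⊂ B).sup id

/-- `nN H B = n(B;H)` is the number of vertices of `B` not covered by the maximal
elements of `H` strictly contained in `B`. -/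
noncomputable def nN (H : Finset (Finset V)) (B : Finset V) : ℕ :=
  (B \ iN H B).card

/-- `C` is a connected component of (the induced subgraph on) `S`. -/
def IsCC (G : SimpleGraph V) (S C : Finset V) : Prop :=
  C ⊆ S ∧ Conn G C ∧ ∀ C', C ⊆ C' → C' ⊆ S → Conn G C' → C' = C

/-- A maximal nested set on `D`. -/
def MaxNested (G : SimpleGraph V) (F : Finset (Finset V)) : Prop :=
  Nested G F ∧ ∀ K, Nested G K → F ⊆ K → K = F


set_option linter.unusedSectionVars false
set_option linter.unnecessarySimpa false
set_option linter.unusedVariables false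

variable {Gr : SimpleGraph V}

lemma conn_nonempty {S : Finset V} (h : Conn Gr S) : S.Nonempty := by
  have := h.nonempty
  rcases this with ⟨⟨x, hx⟩⟩
  exact ⟨x, by simpa using hx⟩

lemma conn_singleton (v : V) : Conn Gr {v} := by
  show (Gr.induce _).Connected
  haveI : Nonempty (({v} : Finset V) : Set V) := ⟨⟨v, by simp⟩⟩
  refine ⟨fun a b => ?_⟩
  have hab : a = b := by
    rcases a with ⟨a, ha⟩; rcases b with ⟨b, hb⟩
    simp only [Finset.coe_singleton, Set.mem_singleton_iff] at ha hb
    subst ha; subst hb; rfl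
  rw [hab]

lemma conn_union {C₁ C₂ : Finset V} (h₁ : Conn Gr C₁) (h₂ : Conn Gr C₂)
    (h : ∃ p ∈ C₁, ∃ q ∈ C₂, p = q ∨ Gr.Adj p q) : Conn Gr (C₁ ∪ C₂) := by
  obtain ⟨p, hp, q, hq, hpq⟩ := h
  show (Gr.induce _).Connected
  rcases hpq with rfl | hadj
  · rw [Finset.coe_union]
    exact SimpleGraph.induce_union_connected h₁.preconnected h₂.preconnected ⟨p, by simp [hp, hq]⟩
  · have hset : ((C₁ ∪ C₂ : Finset V) : Set V) = ((C₁ : Set V) ∪ {p, q}) ∪ (C₂ : Set V) := by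
      ext x
      simp only [Finset.coe_union, Set.mem_union, Set.mem_insert_iff, Set.mem_singleton_iff,
        Finset.mem_coe]
      constructor
      · tauto
      · rintro ((h | rfl | rfl) | h) <;> tauto
    rw [hset]
    refine SimpleGraph.induce_union_connected ?_ h₂.preconnected ⟨q, by simp [hq]⟩
    exact (SimpleGraph.induce_union_connected h₁.preconnected
      (SimpleGraph.induce_pair_connected_of_adj hadj).preconnected ⟨p, by simp [hp]⟩).preconnected

lemma conn_insert {C : Finset V} {p w : V} (hC : Conn Gr C) (hp : p ∈ C)
    (h : p = w ∨ Gr.Adj p w) : Conn Gr (insert w C) := by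
  have := conn_union hC (conn_singleton (Gr := Gr) w) ⟨p, hp, w, by simp, h⟩
  have he : C ∪ {w} = insert w C := by ext x; simp [or_comm]
  rwa [he] at this

lemma walk_cross {W : Type*} {G' : SimpleGraph W} {P : W → Prop} {u v : W}
    (w : G'.Walk u v) : P u → ¬ P v → ∃ a b, G'.Adj a b ∧ P a ∧ ¬ P b := by
  induction w with
  | nil => exact fun hu hv => absurd hu hv
  | @cons a b c hab p ih =>
    intro hu hv
    by_cases hb : P b
    · exact ih hb hv
    · exact ⟨a, b, hab, hu, hb⟩

lemma conn_cross {S : Finset V} (hS : Conn Gr S) {P : V → Prop} {x y : V}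
    (hx : x ∈ S) (hy : y ∈ S) (hPx : P x) (hPy : ¬ P y) :
    ∃ a ∈ S, ∃ b ∈ S, Gr.Adj a b ∧ P a ∧ ¬ P b := by
  obtain ⟨w⟩ := hS.preconnected ⟨x, by simpa using hx⟩ ⟨y, by simpa using hy⟩
  obtain ⟨a, b, hab, hPa, hPb⟩ := walk_cross (P := fun (u : (S : Set V)) => P u.val) w hPx hPy
  exact ⟨a.val, by simpa using a.property, b.val, by simpa using b.property,
    hab, hPa, hPb⟩

lemma exists_isCC {C S : Finset V} (hC : Conn Gr C) (hCS : C ⊆ S) :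
    ∃ M, IsCC Gr S M ∧ C ⊆ M := by
  obtain ⟨M, hM, hmax⟩ := Finset.exists_max_image
    (S.powerset.filter fun X => C ⊆ X ∧ Conn Gr X) Finset.card
    ⟨C, by simp [hC, hCS]⟩
  simp only [Finset.mem_filter, Finset.mem_powerset] at hM
  refine ⟨M, ⟨hM.1, hM.2.2, ?_⟩, hM.2.1⟩
  intro C' hMC' hC'S hC'conn
  have : C' ∈ (S.powerset.filter fun X => C ⊆ X ∧ Conn Gr X) := by
    simp only [Finset.mem_filter, Finset.mem_powerset]
    exact ⟨hC'S, hM.2.1.trans hMC', hC'conn⟩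
  exact (Finset.eq_of_subset_of_card_le hMC' (hmax _ this)).symm

lemma mem_iN {H : Finset (Finset V)} {B : Finset V} {x : V} :
    x ∈ iN H B ↔ ∃ C ∈ H, C ⊂ B ∧ x ∈ C := by
  simp only [iN, Finset.mem_sup, Finset.mem_filter, id]
  tauto

lemma subset_iN {H : Finset (Finset V)} {B C : Finset V} (hC : C ∈ H) (h : C ⊂ B) :
    C ⊆ iN H B := fun x hx => mem_iN.2 ⟨C, hC, h, hx⟩

lemma iN_subset {H : Finset (Finset V)} {B : Finset V} : iN H B ⊆ B := by
  intro x hx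
  obtain ⟨C, _, hCB, hxC⟩ := mem_iN.1 hx
  exact hCB.1 hxC

lemma iN_mono {H H' : Finset (Finset V)} {B : Finset V} (h : H ⊆ H') :
    iN H B ⊆ iN H' B := by
  intro x hx
  obtain ⟨C, hC, hCB, hxC⟩ := mem_iN.1 hx
  exact mem_iN.2 ⟨C, h hC, hCB, hxC⟩

lemma orth_symm {B C : Finset V} (h : Orth Gr B C) : Orth Gr C B :=
  fun a ha b hb hadj => h b hb a ha hadj.symm

lemma compat_symm {B C : Finset V} (h : Compat Gr B C) : Compat Gr C B := by
  rcases h with h | h | h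
  · exact Or.inr (Or.inl h)
  · exact Or.inl h
  · exact Or.inr (Or.inr (orth_symm h))

/-- Maximality: any connected subdiagram compatible with all of `F` lies in `F`. -/
lemma mem_of_maxNested {F : Finset (Finset V)} (hF : MaxNested Gr F) {C : Finset V}
    (hC : Conn Gr C) (h : ∀ A ∈ F, Compat Gr A C) : C ∈ F := by
  have hnest : Nested Gr (insert C F) := by
    refine ⟨Finset.mem_insert_of_mem hF.1.1, ?_, ?_⟩
    · intro B hB
      rcases Finset.mem_insert.1 hB with rfl | hB
      · exact hC
      · exact hF.1.2.1 B hB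
    · intro A hA B hB
      rcases Finset.mem_insert.1 hA with hA' | hA'
      · rcases Finset.mem_insert.1 hB with hB' | hB'
        · rw [hA', hB']; exact Or.inl (le_refl _)
        · rw [hA']; exact compat_symm (h B hB')
      · rcases Finset.mem_insert.1 hB with hB' | hB'
        · rw [hB']; exact h A hA'
        · exact hF.1.2.2 A hA' B hB' 
  have := hF.2 _ hnest (Finset.subset_insert _ _)
  rw [← this]
  exact Finset.mem_insert_self _ _

/-- Key structural lemma: if `a ∈ C \ iN F C` for `C ∈ F` (`F` maximal nested), then every
connected component of `C.erase a` belongs to `F`. -/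
lemma comp_mem {F : Finset (Finset V)} (hF : MaxNested Gr F) {C : Finset V} (hC : C ∈ F)
    {a : V} (ha : a ∈ C) (ha' : a ∉ iN F C) {D : Finset V} (hD : IsCC Gr (C.erase a) D) :
    D ∈ F := by
  obtain ⟨hDsub, hDconn, hDmax⟩ := hD
  have hDC : D ⊆ C := hDsub.trans (Finset.erase_subset _ _)
  refine mem_of_maxNested hF hDconn ?_
  intro A hA
  rcases hF.1.2.2 A hA C hC with hAC | hCA | hOrth
  · -- A ⊆ C
    rcases eq_or_ne A C with rfl | hne
    · exact Or.inr (Or.inl hDC)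
    · have hAiN : A ⊆ iN F C := subset_iN hA ⟨hAC, fun h => hne (Finset.Subset.antisymm hAC h)⟩
      have haA : a ∉ A := fun h => ha' (hAiN h)
      have hAsub : A ⊆ C.erase a := fun x hx =>
        Finset.mem_erase.2 ⟨fun h => haA (h ▸ hx), hAC hx⟩
      by_cases hbridge : ∃ p ∈ A, ∃ q ∈ D, p = q ∨ Gr.Adj p q
      · -- then A ∪ D is connected inside C.erase a, so A ∪ D = D
        have hconn : Conn Gr (A ∪ D) := conn_union (hF.1.2.1 A hA) hDconn hbridge
        have : A ∪ D = D := hDmax _ Finset.subset_union_right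
          (Finset.union_subset hAsub hDsub) hconn
        exact Or.inl (fun x hx => this ▸ Finset.mem_union_left _ hx)
      · push_neg at hbridge
        exact Or.inr (Or.inr (fun p hp q hq hadj => (hbridge p hp q hq).2 hadj))
  · exact Or.inr (Or.inl (hDC.trans hCA))
  · exact Or.inr (Or.inr (fun p hp q hq hadj => hOrth p hp q (hDC hq) hadj))

/-- In a maximal nested set, each element has at most one uncovered vertex. -/
lemma uncov_subsingleton {F : Finset (Finset V)} (hF : MaxNested Gr F) {C : Finset V}
    (hC : C ∈ F) {b b' : V} (hb : b ∈ C \ iN F C) (hb' : b' ∈ C \ iN F C) : b = b' := by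
  by_contra hne
  rw [Finset.mem_sdiff] at hb hb'
  have hb'sub : ({b'} : Finset V) ⊆ C.erase b :=
    Finset.singleton_subset_iff.2 (Finset.mem_erase.2 ⟨fun h => hne h.symm, hb'.1⟩)
  obtain ⟨M, hM, hb'M⟩ := exists_isCC (conn_singleton b') hb'sub
  have hMF : M ∈ F := comp_mem hF hC hb.1 hb.2 hM
  have hMC : M ⊂ C := by
    refine ⟨hM.1.trans (Finset.erase_subset _ _), fun h => ?_⟩
    exact (Finset.mem_erase.1 (hM.1 (h hb.1))).1 rfl
  exact hb'.2 (subset_iN hMF hMC (hb'M (Finset.mem_singleton_self b')))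

/-- One-sided main lemma for an elementary pair. -/
lemma side_main {F Gs : Finset (Finset V)} (hF : MaxNested Gr F) (hGs : MaxNested Gr Gs)
    {B₁ : Finset V} (hFG : F \ Gs = {B₁})
    {B : Finset V} (hB : B ∈ F ∩ Gs)
    {a₁ a₂ : V} (ha₁ : B \ iN F B = {a₁}) (ha₂ : B \ iN Gs B = {a₂}) (hne : a₁ ≠ a₂) :
    B₁ ⊂ B ∧ IsCC Gr (B.erase a₁) B₁ ∧
      ∀ x ∈ B, x ∉ iN (F ∩ Gs) B → x ≠ a₁ → x ∈ B₁ := by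
  have hBF : B ∈ F := (Finset.mem_inter.1 hB).1
  have hBG : B ∈ Gs := (Finset.mem_inter.1 hB).2
  have ha₁B : a₁ ∈ B ∧ a₁ ∉ iN F B := by
    have : a₁ ∈ B \ iN F B := by rw [ha₁]; exact Finset.mem_singleton_self a₁
    exact Finset.mem_sdiff.1 this
  have ha₂B : a₂ ∈ B ∧ a₂ ∉ iN Gs B := by
    have : a₂ ∈ B \ iN Gs B := by rw [ha₂]; exact Finset.mem_singleton_self a₂
    exact Finset.mem_sdiff.1 this
  have hB₁mem : B₁ ∈ F ∧ B₁ ∉ Gs := by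
    have : B₁ ∈ F \ Gs := by rw [hFG]; exact Finset.mem_singleton_self B₁
    exact Finset.mem_sdiff.1 this
  -- key: any uncovered x ≠ a₁ lies in B₁ (and B₁ ⊂ B)
  have key : ∀ x ∈ B, x ∉ iN (F ∩ Gs) B → x ≠ a₁ → x ∈ B₁ ∧ B₁ ⊂ B := by
    intro x hxB hxK hxa
    have hxiN : x ∈ iN F B := by
      by_contra h
      have : x ∈ B \ iN F B := Finset.mem_sdiff.2 ⟨hxB, h⟩
      rw [ha₁] at this
      exact hxa (Finset.mem_singleton.1 this)
    obtain ⟨C, hCF, hCB, hxC⟩ := mem_iN.1 hxiN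
    have hCne : C ∉ Gs := by
      intro hCG
      exact hxK (subset_iN (Finset.mem_inter.2 ⟨hCF, hCG⟩) hCB hxC)
    have : C = B₁ := by
      have : C ∈ F \ Gs := Finset.mem_sdiff.2 ⟨hCF, hCne⟩
      rw [hFG] at this
      exact Finset.mem_singleton.1 this
    exact ⟨this ▸ hxC, this ▸ hCB⟩
  have ha₂K : a₂ ∉ iN (F ∩ Gs) B := fun h =>
    ha₂B.2 (iN_mono (Finset.inter_subset_right) h)
  obtain ⟨ha₂B₁, hB₁B⟩ := key a₂ ha₂B.1 ha₂K (Ne.symm hne)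
  have hB₁iN : B₁ ⊆ iN F B := subset_iN hB₁mem.1 hB₁B
  have ha₁B₁ : a₁ ∉ B₁ := fun h => ha₁B.2 (hB₁iN h)
  have hB₁er : B₁ ⊆ B.erase a₁ := fun y hy =>
    Finset.mem_erase.2 ⟨fun h => ha₁B₁ (h ▸ hy), hB₁B.1 hy⟩
  refine ⟨hB₁B, ⟨hB₁er, hF.1.2.1 B₁ hB₁mem.1, ?_⟩, fun x h1 h2 h3 => (key x h1 h2 h3).1⟩
  intro C' hBC' hC'er hC'conn
  obtain ⟨M, hM, hC'M⟩ := exists_isCC hC'conn hC'er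
  have hMF : M ∈ F := comp_mem hF hBF ha₁B.1 ha₁B.2 hM
  have hMB : M ⊂ B := by
    refine ⟨hM.1.trans (Finset.erase_subset _ _), fun h => ?_⟩
    exact (Finset.mem_erase.1 (hM.1 (h ha₁B.1))).1 rfl
  have hMeq : M = B₁ := by
    by_contra hMne
    have hMG : M ∈ Gs := by
      by_contra hMG
      have : M ∈ F \ Gs := Finset.mem_sdiff.2 ⟨hMF, hMG⟩
      rw [hFG] at this
      exact hMne (Finset.mem_singleton.1 this)
    exact ha₂B.2 (subset_iN hMG hMB (hC'M (hBC' ha₂B₁)))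
  exact Finset.Subset.antisymm (hMeq ▸ hC'M) hBC'

lemma a_ne {F Gs : Finset (Finset V)} (hF : MaxNested Gr F) (hGs : MaxNested Gr Gs)
    {B : Finset V} (hB : B ∈ F ∩ Gs) (hBu : 2 ≤ nN (F ∩ Gs) B)
    {a₁ a₂ : V} (ha₁ : B \ iN F B = {a₁}) (ha₂ : B \ iN Gs B = {a₂}) : a₁ ≠ a₂ := by
  intro heq
  subst heq
  have hBF : B ∈ F := (Finset.mem_inter.1 hB).1
  have hBG : B ∈ Gs := (Finset.mem_inter.1 hB).2
  have ha₁B : a₁ ∈ B ∧ a₁ ∉ iN F B := by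
    have : a₁ ∈ B \ iN F B := by rw [ha₁]; exact Finset.mem_singleton_self a₁
    exact Finset.mem_sdiff.1 this
  have ha₁G : a₁ ∉ iN Gs B := by
    have : a₁ ∈ B \ iN Gs B := by rw [ha₂]; exact Finset.mem_singleton_self a₁
    exact (Finset.mem_sdiff.1 this).2
  obtain ⟨x, hx, y, hy, hxy⟩ := Finset.one_lt_card.1 (lt_of_lt_of_le one_lt_two hBu)
  -- pick an uncovered vertex different from a₁
  have : ∃ z ∈ B \ iN (F ∩ Gs) B, z ≠ a₁ := by
    by_cases hxa : x = a₁
    · exact ⟨y, hy, fun h => hxy (hxa.trans h.symm)⟩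
    · exact ⟨x, hx, hxa⟩
  obtain ⟨z, hz, hza⟩ := this
  rw [Finset.mem_sdiff] at hz
  have hzer : ({z} : Finset V) ⊆ B.erase a₁ :=
    Finset.singleton_subset_iff.2 (Finset.mem_erase.2 ⟨hza, hz.1⟩)
  obtain ⟨M, hM, hzM⟩ := exists_isCC (conn_singleton z) hzer
  have hMF : M ∈ F := comp_mem hF hBF ha₁B.1 ha₁B.2 hM
  have hMG : M ∈ Gs := comp_mem hGs hBG ha₁B.1 ha₁G hM
  have hMB : M ⊂ B := by
    refine ⟨hM.1.trans (Finset.erase_subset _ _), fun h => ?_⟩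
    exact (Finset.mem_erase.1 (hM.1 (h ha₁B.1))).1 rfl
  exact hz.2 (subset_iN (Finset.mem_inter.2 ⟨hMF, hMG⟩) hMB
    (hzM (Finset.mem_singleton_self z)))

lemma cc_ssubset {B M : Finset V} {a : V} (hM : IsCC Gr (B.erase a) M) (ha : a ∈ B) :
    M ⊂ B := by
  refine ⟨hM.1.trans (Finset.erase_subset _ _), fun h => ?_⟩
  exact (Finset.mem_erase.1 (hM.1 (h ha))).1 rfl

end NestedSets

/-- Properties of an elementary pair `(F, Gs)` of maximal nested sets:
with `B` the unique unsaturated element of `F ∩ Gs`, `B₁` the unique element of `F \ Gs`,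
`B₂` the unique element of `Gs \ F`, and `a₁ = α^B_F`, `a₂ = α^B_Gs`:
(1) `a₁ ≠ a₂` and the uncovered vertex set of `B` in `F ∩ Gs` is `{a₁, a₂}`;
(2) `B₁` is the connected component of `B \ {a₁}` containing `a₂`, and `B₂` is the
connected component of `B \ {a₂}` containing `a₁`;
(3) `B₁`, `B₂` are not compatible and `B₁ ∪ B₂ = B`. -/
theorem stmt6 {V : Type*} [Fintype V] [DecidableEq V]
    (Gr : SimpleGraph V) (hGr : Gr.Connected)
    (F Gs : Finset (Finset V)) (hF : MaxNested Gr F) (hGs : MaxNested Gr Gs)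
    (B₁ B₂ : Finset V) (hFG : F \ Gs = {B₁}) (hGF : Gs \ F = {B₂})
    (B : Finset V) (hB : B ∈ F ∩ Gs) (hBu : 2 ≤ nN (F ∩ Gs) B)
    (a₁ a₂ : V) (ha₁ : B \ iN F B = {a₁}) (ha₂ : B \ iN Gs B = {a₂}) :
    a₁ ≠ a₂ ∧ B \ iN (F ∩ Gs) B = {a₁, a₂} ∧
    (IsCC Gr (B.erase a₁) B₁ ∧ a₂ ∈ B₁) ∧
    (IsCC Gr (B.erase a₂) B₂ ∧ a₁ ∈ B₂) ∧
    ¬ Compat Gr B₁ B₂ ∧ B₁ ∪ B₂ = B := by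
  have hBF : B ∈ F := (Finset.mem_inter.1 hB).1
  have hBG : B ∈ Gs := (Finset.mem_inter.1 hB).2
  have hBsym : B ∈ Gs ∩ F := Finset.mem_inter.2 ⟨hBG, hBF⟩
  have hne : a₁ ≠ a₂ := a_ne hF hGs hB hBu ha₁ ha₂
  obtain ⟨hB₁B, hcc₁, hkey₁⟩ := side_main hF hGs hFG hB ha₁ ha₂ hne
  obtain ⟨hB₂B, hcc₂, hkey₂⟩ := side_main hGs hF hGF hBsym ha₂ ha₁ hne.symm
  have ha₁B : a₁ ∈ B ∧ a₁ ∉ iN F B := by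
    have : a₁ ∈ B \ iN F B := by rw [ha₁]; exact Finset.mem_singleton_self a₁
    exact Finset.mem_sdiff.1 this
  have ha₂B : a₂ ∈ B ∧ a₂ ∉ iN Gs B := by
    have : a₂ ∈ B \ iN Gs B := by rw [ha₂]; exact Finset.mem_singleton_self a₂
    exact Finset.mem_sdiff.1 this
  have ha₁K : a₁ ∉ iN (F ∩ Gs) B := fun h =>
    ha₁B.2 (iN_mono Finset.inter_subset_left h)
  have ha₂K : a₂ ∉ iN (F ∩ Gs) B := fun h =>
    ha₂B.2 (iN_mono Finset.inter_subset_right h)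
  have ha₂B₁ : a₂ ∈ B₁ := hkey₁ a₂ ha₂B.1 ha₂K hne.symm
  have ha₁B₂ : a₁ ∈ B₂ := hkey₂ a₁ ha₁B.1 (by rwa [Finset.inter_comm]) hne
  have ha₁B₁ : a₁ ∉ B₁ := fun h => (Finset.mem_erase.1 (hcc₁.1 h)).1 rfl
  have ha₂B₂ : a₂ ∉ B₂ := fun h => (Finset.mem_erase.1 (hcc₂.1 h)).1 rfl
  have hBconn : Conn Gr B := hF.1.2.1 B hBF
  have hB₁F : B₁ ∈ F := by
    have : B₁ ∈ F \ Gs := by rw [hFG]; exact Finset.mem_singleton_self B₁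
    exact (Finset.mem_sdiff.1 this).1
  -- B₁ ∪ B₂ = B
  have hU : B₁ ∪ B₂ = B := by
    refine Finset.Subset.antisymm (Finset.union_subset hB₁B.1 hB₂B.1) ?_
    intro v hv
    by_contra hvn
    rw [Finset.mem_union] at hvn
    push_neg at hvn
    obtain ⟨hvB₁, hvB₂⟩ := hvn
    have hva₁ : v ≠ a₁ := fun h => hvB₂ (h ▸ ha₁B₂)
    have hva₂ : v ≠ a₂ := fun h => hvB₁ (h ▸ ha₂B₁)
    obtain ⟨M, hM, hvM'⟩ := exists_isCC (conn_singleton v)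
      (Finset.singleton_subset_iff.2 (Finset.mem_erase.2 ⟨hva₁, hv⟩))
    have hvM : v ∈ M := hvM' (Finset.mem_singleton_self v)
    have hMF : M ∈ F := comp_mem hF hBF ha₁B.1 ha₁B.2 hM
    have hMB : M ⊂ B := cc_ssubset hM ha₁B.1
    have hMG : M ∈ Gs := by
      by_contra hMG
      have : M ∈ F \ Gs := Finset.mem_sdiff.2 ⟨hMF, hMG⟩
      rw [hFG] at this
      exact hvB₁ ((Finset.mem_singleton.1 this) ▸ hvM)
    have ha₂M : a₂ ∉ M := fun h => ha₂B.2 (subset_iN hMG hMB h)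
    obtain ⟨M', hM'cc, hvM''⟩ := exists_isCC (conn_singleton v)
      (Finset.singleton_subset_iff.2 (Finset.mem_erase.2 ⟨hva₂, hv⟩))
    have hvMM : v ∈ M' := hvM'' (Finset.mem_singleton_self v)
    have hM'G : M' ∈ Gs := comp_mem hGs hBG ha₂B.1 ha₂B.2 hM'cc
    have hM'B : M' ⊂ B := cc_ssubset hM'cc ha₂B.1
    have hM'F : M' ∈ F := by
      by_contra hM'F
      have : M' ∈ Gs \ F := Finset.mem_sdiff.2 ⟨hM'G, hM'F⟩
      rw [hGF] at this
      exact hvB₂ ((Finset.mem_singleton.1 this) ▸ hvMM)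
    have ha₁M' : a₁ ∉ M' := fun h => ha₁B.2 (subset_iN hM'F hM'B h)
    have hMer₂ : M ⊆ B.erase a₂ := fun y hy =>
      Finset.mem_erase.2 ⟨fun h => ha₂M (h ▸ hy), hMB.1 hy⟩
    have hM'er₁ : M' ⊆ B.erase a₁ := fun y hy =>
      Finset.mem_erase.2 ⟨fun h => ha₁M' (h ▸ hy), hM'B.1 hy⟩
    have hunion : Conn Gr (M ∪ M') :=
      conn_union hM.2.1 hM'cc.2.1 ⟨v, hvM, v, hvMM, Or.inl rfl⟩
    have hMM' : M ⊆ M' := by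
      have := hM'cc.2.2 (M ∪ M') Finset.subset_union_right
        (Finset.union_subset hMer₂ hM'cc.1) hunion
      exact fun x hx => this ▸ Finset.mem_union_left _ hx
    have hM'M : M' ⊆ M := by
      have hu2 : Conn Gr (M' ∪ M) :=
        conn_union hM'cc.2.1 hM.2.1 ⟨v, hvMM, v, hvM, Or.inl rfl⟩
      have := hM.2.2 (M' ∪ M) Finset.subset_union_right
        (Finset.union_subset hM'er₁ hM.1) hu2
      exact fun x hx => this ▸ Finset.mem_union_left _ hx
    have ha₁M : a₁ ∉ M := fun h => (Finset.mem_erase.1 (hM.1 h)).1 rfl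
    obtain ⟨p, hp, q, hq, hadj, hpM, hqM⟩ :=
      conn_cross hBconn (P := fun z => z ∈ M) hv ha₁B.1 hvM ha₁M
    rcases eq_or_ne q a₁ with hq1 | hq1
    · -- use that M is also a component of B.erase a₂
      have hqa₂ : q ≠ a₂ := hq1 ▸ hne
      have hNconn : Conn Gr (insert q M) := conn_insert hM.2.1 hpM (Or.inr hadj)
      have hNsub : insert q M ⊆ B.erase a₂ :=
        Finset.insert_subset (Finset.mem_erase.2 ⟨hqa₂, hq⟩) hMer₂
      have := hM'cc.2.2 (insert q M)
        (fun x hx => Finset.mem_insert_of_mem (hM'M hx)) hNsub hNconn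
      exact hqM (hM'M (this ▸ Finset.mem_insert_self q M))
    · have hNconn : Conn Gr (insert q M) := conn_insert hM.2.1 hpM (Or.inr hadj)
      have hNsub : insert q M ⊆ B.erase a₁ :=
        Finset.insert_subset (Finset.mem_erase.2 ⟨hq1, hq⟩) hM.1
      have := hM.2.2 (insert q M) (Finset.subset_insert _ _) hNsub hNconn
      exact hqM (this ▸ Finset.mem_insert_self q M)
  -- not compatible
  have hNC : ¬ Compat Gr B₁ B₂ := by
    rintro (h | h | h)
    · exact ha₂B₂ (h ha₂B₁)
    · exact ha₁B₁ (h ha₁B₂)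
    · obtain ⟨p, hp, q, hq, hadj, hpB₁, hqB₁⟩ :=
        conn_cross hBconn (P := fun z => z ∈ B₁) ha₂B.1 ha₁B.1 ha₂B₁ ha₁B₁
      have hqB₂ : q ∈ B₂ := by
        have : q ∈ B₁ ∪ B₂ := hU ▸ hq
        rcases Finset.mem_union.1 this with h' | h'
        · exact absurd h' hqB₁
        · exact h'
      exact h p hpB₁ q hqB₂ hadj
  -- uncovered set is {a₁, a₂}
  have hset : B \ iN (F ∩ Gs) B = {a₁, a₂} := by
    ext x
    rw [Finset.mem_sdiff, Finset.mem_insert, Finset.mem_singleton]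
    constructor
    · rintro ⟨hxB, hxK⟩
      by_cases hx1 : x = a₁
      · exact Or.inl hx1
      by_cases hx2 : x = a₂
      · exact Or.inr hx2
      exfalso
      have hxB₁ : x ∈ B₁ := hkey₁ x hxB hxK hx1
      have hsub : iN F B₁ ⊆ iN (F ∩ Gs) B := by
        intro y hy
        obtain ⟨A, hAF, hAB₁, hyA⟩ := mem_iN.1 hy
        have hAG : A ∈ Gs := by
          by_contra hAG
          have : A ∈ F \ Gs := Finset.mem_sdiff.2 ⟨hAF, hAG⟩
          rw [hFG] at this
          exact hAB₁.2 ((Finset.mem_singleton.1 this) ▸ Finset.Subset.refl _)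
        exact subset_iN (Finset.mem_inter.2 ⟨hAF, hAG⟩) (hAB₁.trans hB₁B) hyA
      have hx' : x ∈ B₁ \ iN F B₁ :=
        Finset.mem_sdiff.2 ⟨hxB₁, fun h => hxK (hsub h)⟩
      have ha' : a₂ ∈ B₁ \ iN F B₁ :=
        Finset.mem_sdiff.2 ⟨ha₂B₁, fun h => ha₂K (hsub h)⟩
      exact hx2 (uncov_subsingleton hF hB₁F hx' ha')
    · rintro (rfl | rfl)
      · exact ⟨ha₁B.1, ha₁K⟩
      · exact ⟨ha₂B.1, ha₂K⟩
  exact ⟨hne, hset, ⟨hcc₁, ha₂B₁⟩, ⟨hcc₂, ha₁B₂⟩, hNC, hU⟩
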